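/- Let G be a nilpotent π-torsion-free group, n a π-number, and suppose x, y ∈ G satisfy x^n = y^n. Then x = y. -/

import Mathlib

def IsPiNumber (π : Set ℕ) (n : ℕ) : Prop :=
  0 < n ∧ ∀ p : ℕ, p.Prime → p ∣ n → p ∈ π

section Aux

variable {G : Type*} [Group G]

/-- Commutator power identity: if `z = a*b*a⁻¹*b⁻¹` commutes with `a`, then
`a^m * b * (a^m)⁻¹ * b⁻¹ = z^m`. -/
lemma aux_pow_commutator (a b : G) (h : Commute (a * b * a⁻¹ * b⁻¹) a) (m : ℕ) :
    a ^ m * b * (a ^ m)⁻¹ * b⁻¹ = (a * b * a⁻¹ * b⁻¹) ^ m := by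
  induction m with
  | zero => simp
  | succ m ih =>
    set z := a * b * a⁻¹ * b⁻¹ with hz
    have ih' : a ^ m * b * (a ^ m)⁻¹ = z ^ m * b := by
      have := congrArg (· * b) ih
      simpa [mul_assoc] using this
    have hcomm : a * z ^ m = z ^ m * a := ((h.pow_left m).symm).eq
    calc a ^ (m + 1) * b * (a ^ (m + 1))⁻¹ * b⁻¹
        = a * (a ^ m * b * (a ^ m)⁻¹) * a⁻¹ * b⁻¹ := by
          rw [pow_succ']
          group
      _ = a * (z ^ m * b) * a⁻¹ * b⁻¹ := by rw [ih']
      _ = z ^ m * (a * b * a⁻¹ * b⁻¹) := by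
          rw [← mul_assoc, ← mul_assoc, hcomm]
          group
      _ = z ^ (m + 1) := by rw [pow_succ, ← hz]

/-- The image of an element of `Z_{i+1}` is central in `G ⧸ Z_i`. -/
lemma aux_central_image {i : ℕ} {t : G} (ht : t ∈ Subgroup.upperCentralSeries G (i + 1))
    (q : G ⧸ Subgroup.upperCentralSeries G i) :
    Commute (QuotientGroup.mk t : G ⧸ Subgroup.upperCentralSeries G i) q := by
  obtain ⟨y, rfl⟩ := QuotientGroup.mk_surjective q
  have hmem : t * y * t⁻¹ * y⁻¹ ∈ Subgroup.upperCentralSeries G i :=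
    (mem_upperCentralSeries_succ_iff).mp ht y
  have h1 : (QuotientGroup.mk (t * y * t⁻¹ * y⁻¹) : G ⧸ Subgroup.upperCentralSeries G i) = 1 :=
    (QuotientGroup.eq_one_iff _).mpr hmem
  have h2 : (QuotientGroup.mk t * QuotientGroup.mk y * (QuotientGroup.mk t)⁻¹ *
      (QuotientGroup.mk y)⁻¹ : G ⧸ Subgroup.upperCentralSeries G i) = 1 := by
    simpa using h1
  unfold Commute SemiconjBy
  calc (QuotientGroup.mk t * QuotientGroup.mk y : G ⧸ Subgroup.upperCentralSeries G i)
      = (QuotientGroup.mk t * QuotientGroup.mk y * (QuotientGroup.mk t)⁻¹ *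
          (QuotientGroup.mk y)⁻¹) * (QuotientGroup.mk y * QuotientGroup.mk t) := by group
    _ = QuotientGroup.mk y * QuotientGroup.mk t := by rw [h2]; group

end Aux

theorem pi_roots_unique (G : Type*) [Group G] [Group.IsNilpotent G] (π : Set ℕ)
    (hTF : ∀ g : G, ∀ m : ℕ, IsPiNumber π m → g ^ m = 1 → g = 1)
    (n : ℕ) (hn : IsPiNumber π n) (x y : G) (h : x ^ n = y ^ n) :
    x = y := by
  -- Step 1: isolation of upper central series terms, one step down
  have S : ∀ i : ℕ, ∀ g : G, ∀ m : ℕ, IsPiNumber π m →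
      g ^ m ∈ Subgroup.upperCentralSeries G i → g ∈ Subgroup.upperCentralSeries G (i + 1) →
      g ∈ Subgroup.upperCentralSeries G i := by
    intro i
    induction i with
    | zero =>
      intro g m hm hgm _
      rw [upperCentralSeries_zero] at hgm ⊢
      simp only [Subgroup.mem_bot] at hgm ⊢
      exact hTF g m hm hgm
    | succ i ih =>
      intro g m hm hgm hg
      rw [mem_upperCentralSeries_succ_iff]
      intro xx
      set c := g * xx * g⁻¹ * xx⁻¹ with hc
      have hcZ : c ∈ Subgroup.upperCentralSeries G (i + 1) :=
        (mem_upperCentralSeries_succ_iff).mp hg xx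
      -- show c ^ m ∈ Z i
      have hcm : c ^ m ∈ Subgroup.upperCentralSeries G i := by
        rw [← QuotientGroup.eq_one_iff (G := G) (N := Subgroup.upperCentralSeries G i)]
        have hcomm : Commute (QuotientGroup.mk g * QuotientGroup.mk xx *
            (QuotientGroup.mk g)⁻¹ * (QuotientGroup.mk xx)⁻¹ :
            G ⧸ Subgroup.upperCentralSeries G i) (QuotientGroup.mk g) := by
          have : ((QuotientGroup.mk g * QuotientGroup.mk xx * (QuotientGroup.mk g)⁻¹ *
              (QuotientGroup.mk xx)⁻¹ : G ⧸ Subgroup.upperCentralSeries G i)) =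
              QuotientGroup.mk c := by simp [hc]
          rw [this]
          exact aux_central_image hcZ _
        have key := aux_pow_commutator (QuotientGroup.mk g : G ⧸ Subgroup.upperCentralSeries G i)
          (QuotientGroup.mk xx) hcomm m
        -- LHS of key is mk of (g^m * xx * (g^m)⁻¹ * xx⁻¹) which is 1 since g^m ∈ Z (i+1)
        have hgmc : g ^ m * xx * (g ^ m)⁻¹ * xx⁻¹ ∈ Subgroup.upperCentralSeries G i :=
          (mem_upperCentralSeries_succ_iff).mp hgm xx
        have h1 : ((QuotientGroup.mk g : G ⧸ Subgroup.upperCentralSeries G i)) ^ m *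
            QuotientGroup.mk xx * (((QuotientGroup.mk g : G ⧸ Subgroup.upperCentralSeries G i)) ^ m)⁻¹ *
            (QuotientGroup.mk xx)⁻¹ = 1 := by
          have := (QuotientGroup.eq_one_iff _).mpr hgmc
          simpa using this
        rw [h1] at key
        have : ((QuotientGroup.mk c : G ⧸ Subgroup.upperCentralSeries G i)) ^ m = 1 := by
          rw [hc]
          simpa using key.symm
        simpa using this
      exact ih c m hm hcm hcZ
  -- Step 2: full isolation
  have Iso : ∀ i : ℕ, ∀ g : G, ∀ m : ℕ, IsPiNumber π m →
      g ^ m ∈ Subgroup.upperCentralSeries G i → g ∈ Subgroup.upperCentralSeries G i := by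
    intro i g m hm hgm
    obtain ⟨k, hk⟩ := Group.IsNilpotent.nilpotent' (G := G)
    have down : ∀ j : ℕ, g ∈ Subgroup.upperCentralSeries G (i + j) → g ∈ Subgroup.upperCentralSeries G i := by
      intro j
      induction j with
      | zero => exact fun hgj => hgj
      | succ j ihj =>
        intro hgj
        apply ihj
        exact S (i + j) g m hm
          (upperCentralSeries_mono G (Nat.le_add_right i j) hgm) hgj
    apply down k
    have : g ∈ Subgroup.upperCentralSeries G k := by rw [hk]; trivial
    exact upperCentralSeries_mono G (Nat.le_add_left k i) this
  -- Step 3: main argument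
  set t := x⁻¹ * y with hT
  have key : ∀ i : ℕ, t ∈ Subgroup.upperCentralSeries G (i + 1) → t ∈ Subgroup.upperCentralSeries G i := by
    intro i ht
    apply Iso i t n hn
    -- show t ^ n ∈ Z i using the quotient
    rw [← QuotientGroup.eq_one_iff (G := G) (N := Subgroup.upperCentralSeries G i)]
    have hcen : ∀ q : G ⧸ Subgroup.upperCentralSeries G i,
        Commute (QuotientGroup.mk t : G ⧸ Subgroup.upperCentralSeries G i) q := aux_central_image ht
    have hy : (QuotientGroup.mk y : G ⧸ Subgroup.upperCentralSeries G i) =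
        QuotientGroup.mk x * QuotientGroup.mk t := by
      rw [hT]; simp [mul_assoc]
    have hpow : ((QuotientGroup.mk x : G ⧸ Subgroup.upperCentralSeries G i) * QuotientGroup.mk t) ^ n =
        (QuotientGroup.mk x : G ⧸ Subgroup.upperCentralSeries G i) ^ n *
        (QuotientGroup.mk t : G ⧸ Subgroup.upperCentralSeries G i) ^ n :=
      ((hcen (QuotientGroup.mk x)).symm).mul_pow n
    have hxy : ((QuotientGroup.mk x : G ⧸ Subgroup.upperCentralSeries G i)) ^ n =
        ((QuotientGroup.mk y : G ⧸ Subgroup.upperCentralSeries G i)) ^ n := by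
      have : (QuotientGroup.mk (x ^ n) : G ⧸ Subgroup.upperCentralSeries G i) =
          QuotientGroup.mk (y ^ n) := by rw [h]
      simpa using this
    rw [hy, hpow] at hxy
    have : ((QuotientGroup.mk t : G ⧸ Subgroup.upperCentralSeries G i)) ^ n = 1 :=
      left_eq_mul.mp hxy
    simpa using this
  -- conclude: t ∈ Z k for some k with Z k = ⊤, descend to Z 0 = ⊥
  obtain ⟨k, hk⟩ := Group.IsNilpotent.nilpotent' (G := G)
  have ht0 : t ∈ Subgroup.upperCentralSeries G 0 := by
    have : ∀ j : ℕ, t ∈ Subgroup.upperCentralSeries G j → t ∈ Subgroup.upperCentralSeries G 0 := by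
      intro j
      induction j with
      | zero => exact fun hh => hh
      | succ j ihj => exact fun hh => ihj (key j hh)
    apply this k
    rw [hk]; trivial
  rw [upperCentralSeries_zero, Subgroup.mem_bot, hT] at ht0
  exact inv_mul_eq_one.mp ht0
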